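/- Let B ⊂ ℝ^n be a full-dimensional box, let K = (K_1^-, K_1^+, …, K_n^-, K_n^+) be a vector of finite real numbers with K_i^- < K_i^+ for all i, and let f be a continuously differentiable function on B with K-bounded derivatives over B. Then for every ε > 0 there exist d ∈ ℕ and a polynomial h of degree at most d that has K-bounded derivatives over B and satisfies sup_{x ∈ B} |h(x) − f(x)| < ε. -/

import Mathlib

open MvPolynomial

/-- The partial derivative of `g : ℝⁿ → ℝ` in the `i`-th coordinate direction. -/
noncomputable def partialDeriv {n : ℕ} (i : Fin n) (g : (Fin n → ℝ) → ℝ) :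
    (Fin n → ℝ) → ℝ :=
  fun x => fderiv ℝ g x (Pi.single i 1)



lemma aux_pderiv_aeval {n : ℕ} (i : Fin n) (q : MvPolynomial (Fin n) ℝ) (p : Polynomial ℝ) :
    pderiv i (Polynomial.aeval q p) =
      Polynomial.aeval q (Polynomial.derivative p) * pderiv i q := by
  induction p using Polynomial.induction_on' with
  | add p r hp hr => simp [hp, hr, add_mul]
  | monomial m a =>
    simp only [Polynomial.aeval_monomial, Polynomial.derivative_monomial]
    rw [Derivation.leibniz]
    simp [Derivation.leibniz_pow]
    cases m with
    | zero => simp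
    | succ m =>
      simp [pow_succ, mul_pow, Nat.succ_sub_one]
      ring

lemma aux_eval_aeval {n : ℕ} (x : Fin n → ℝ) (q : MvPolynomial (Fin n) ℝ) (p : Polynomial ℝ) :
    eval x (Polynomial.aeval q p) = Polynomial.eval (eval x q) p := by
  induction p using Polynomial.induction_on' with
  | add p r hp hr => simp [hp, hr]
  | monomial m a => simp [Polynomial.aeval_monomial]

lemma aux_pderiv_prod_zero {n : ℕ} {ι : Type*} [DecidableEq ι] (i : Fin n) (s : Finset ι)
    (g : ι → MvPolynomial (Fin n) ℝ) (hg : ∀ j ∈ s, pderiv i (g j) = 0) :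
    pderiv i (∏ j ∈ s, g j) = 0 := by
  induction s using Finset.induction_on with
  | empty => simp
  | @insert a s' hj ih =>
    rw [Finset.prod_insert hj, pderiv_mul, hg a (Finset.mem_insert_self a s'),
      ih fun j hjs => hg j (Finset.mem_insert_of_mem hjs)]
    simp


lemma aux_bern_nonneg {m ν : ℕ} {t : ℝ} (h0 : 0 ≤ t) (h1 : t ≤ 1) :
    0 ≤ (bernsteinPolynomial ℝ m ν).eval t := by
  simp only [bernsteinPolynomial, Polynomial.eval_mul, Polynomial.eval_pow,
    Polynomial.eval_natCast, Polynomial.eval_X, Polynomial.eval_sub, Polynomial.eval_one]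
  have : (0:ℝ) ≤ 1 - t := by linarith
  positivity

lemma aux_bern_sum (m : ℕ) (t : ℝ) :
    ∑ ν ∈ Finset.range (m + 1), (bernsteinPolynomial ℝ m ν).eval t = 1 := by
  have := congrArg (Polynomial.eval t) (bernsteinPolynomial.sum ℝ m)
  simpa [Polynomial.eval_finset_sum] using this

lemma aux_bern_var {m : ℕ} (hm : 0 < m) {t : ℝ} (h0 : 0 ≤ t) (h1 : t ≤ 1) :
    ∑ ν ∈ Finset.range (m + 1), ((ν : ℝ) / m - t) ^ 2 * (bernsteinPolynomial ℝ m ν).eval t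
      ≤ 1 / (4 * m) := by
  have := congrArg (Polynomial.eval t) (bernsteinPolynomial.variance ℝ m)
  simp only [Polynomial.eval_finset_sum, Polynomial.eval_mul, Polynomial.eval_pow,
    Polynomial.eval_sub, Polynomial.eval_smul, Polynomial.eval_natCast, Polynomial.eval_X,
    Polynomial.eval_one, smul_eq_mul, nsmul_eq_mul] at this
  have hmpos : (0:ℝ) < m := by exact_mod_cast hm
  have key : ∑ ν ∈ Finset.range (m + 1), ((ν : ℝ) / m - t) ^ 2 *
      (bernsteinPolynomial ℝ m ν).eval t = t * (1 - t) / m := by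
    have : ∑ ν ∈ Finset.range (m + 1),
        ((m:ℝ) * t - ν) ^ 2 * (bernsteinPolynomial ℝ m ν).eval t = m * t * (1 - t) := this
    calc ∑ ν ∈ Finset.range (m + 1), ((ν : ℝ) / m - t) ^ 2 * (bernsteinPolynomial ℝ m ν).eval t
        = (1 / m^2) * ∑ ν ∈ Finset.range (m + 1),
            ((m:ℝ) * t - ν) ^ 2 * (bernsteinPolynomial ℝ m ν).eval t := by
          rw [Finset.mul_sum]
          refine Finset.sum_congr rfl fun ν _ => ?_
          have hsq : ((ν:ℝ)/m - t)^2 = ((m:ℝ)*t - ν)^2 / m^2 := by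
            rw [div_sub' (ne_of_gt hmpos), div_pow]
            congr 1
            ring
          rw [hsq]
          field_simp
      _ = t * (1 - t) / m := by rw [this]; field_simp
  rw [key]
  rw [div_le_div_iff₀ hmpos (by positivity)]
  nlinarith [sq_nonneg (t - 1/2)]

lemma aux_abel (M : ℕ) (a : ℕ → ℝ) (t : ℝ) :
    ∑ ν ∈ Finset.range (M + 2), a ν * (Polynomial.derivative (bernsteinPolynomial ℝ (M+1) ν)).eval t
      = (M+1) * ∑ ν ∈ Finset.range (M + 1),
          (a (ν+1) - a ν) * (bernsteinPolynomial ℝ M ν).eval t := by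
  rw [Finset.sum_range_succ']
  have h0 : (Polynomial.derivative (bernsteinPolynomial ℝ (M+1) 0)).eval t
      = -(M+1) * (bernsteinPolynomial ℝ M 0).eval t := by
    rw [bernsteinPolynomial.derivative_zero]
    push_cast
    simp
  have hs : ∀ ν, (Polynomial.derivative (bernsteinPolynomial ℝ (M+1) (ν+1))).eval t
      = (M+1) * ((bernsteinPolynomial ℝ M ν).eval t - (bernsteinPolynomial ℝ M (ν+1)).eval t) := by
    intro ν
    rw [bernsteinPolynomial.derivative_succ]
    push_cast
    simp
  rw [h0]
  simp only [hs]
  have hzero : (bernsteinPolynomial ℝ M (M+1)).eval t = 0 := by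
    rw [bernsteinPolynomial.eq_zero_of_lt ℝ (Nat.lt_succ_self M)]; simp
  -- expand and reindex
  have expand : ∑ ν ∈ Finset.range (M + 1),
      a (ν+1) * ((M+1) * ((bernsteinPolynomial ℝ M ν).eval t - (bernsteinPolynomial ℝ M (ν+1)).eval t))
      = (∑ ν ∈ Finset.range (M + 1), a (ν+1) * (M+1) * (bernsteinPolynomial ℝ M ν).eval t)
        - ∑ ν ∈ Finset.range (M + 1), a (ν+1) * (M+1) * (bernsteinPolynomial ℝ M (ν+1)).eval t := by
    rw [← Finset.sum_sub_distrib]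
    refine Finset.sum_congr rfl fun ν _ => by ring
  rw [expand]
  have reindex : ∑ ν ∈ Finset.range (M + 1), a (ν+1) * (M+1) * (bernsteinPolynomial ℝ M (ν+1)).eval t
      = (∑ ν ∈ Finset.range (M + 1), a ν * (M+1) * (bernsteinPolynomial ℝ M ν).eval t)
        - a 0 * (M+1) * (bernsteinPolynomial ℝ M 0).eval t := by
    have := Finset.sum_range_succ' (fun ν => a ν * (M+1) * (bernsteinPolynomial ℝ M ν).eval t) (M+1)
    rw [Finset.sum_range_succ] at this
    rw [eq_sub_iff_add_eq, ← this, hzero]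
    ring
  rw [reindex, Finset.mul_sum]
  have : ∀ ν, (M+1:ℝ) * ((a (ν+1) - a ν) * (bernsteinPolynomial ℝ M ν).eval t)
      = a (ν+1) * (M+1) * (bernsteinPolynomial ℝ M ν).eval t
        - a ν * (M+1) * (bernsteinPolynomial ℝ M ν).eval t := fun ν => by ring
  simp only [this, Finset.sum_sub_distrib]
  ring


-- convex combination bounds
lemma aux_convex {ι : Type*} (s : Finset ι) (w v : ι → ℝ) (a b : ℝ)
    (hw : ∀ k ∈ s, 0 ≤ w k) (hsum : ∑ k ∈ s, w k = 1)
    (hv : ∀ k ∈ s, a ≤ v k ∧ v k ≤ b) :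
    a ≤ ∑ k ∈ s, w k * v k ∧ ∑ k ∈ s, w k * v k ≤ b := by
  constructor
  · calc a = ∑ k ∈ s, w k * a := by rw [← Finset.sum_mul, hsum, one_mul]
      _ ≤ ∑ k ∈ s, w k * v k :=
        Finset.sum_le_sum fun k hk => mul_le_mul_of_nonneg_left (hv k hk).1 (hw k hk)
  · calc ∑ k ∈ s, w k * v k ≤ ∑ k ∈ s, w k * b :=
        Finset.sum_le_sum fun k hk => mul_le_mul_of_nonneg_left (hv k hk).2 (hw k hk)
      _ = b := by rw [← Finset.sum_mul, hsum, one_mul]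

-- Cauchy-Schwarz / Jensen
lemma aux_cs {ι : Type*} (s : Finset ι) (w a : ι → ℝ)
    (hw : ∀ k ∈ s, 0 ≤ w k) (hsum : ∑ k ∈ s, w k = 1) :
    ∑ k ∈ s, w k * |a k| ≤ Real.sqrt (∑ k ∈ s, w k * (a k) ^ 2) := by
  have h1 : (0:ℝ) ≤ ∑ k ∈ s, w k * |a k| :=
    Finset.sum_nonneg fun k hk => mul_nonneg (hw k hk) (abs_nonneg _)
  have h2 : (0:ℝ) ≤ ∑ k ∈ s, w k * (a k) ^ 2 :=
    Finset.sum_nonneg fun k hk => mul_nonneg (hw k hk) (sq_nonneg _)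
  rw [Real.le_sqrt h1 h2]
  calc (∑ k ∈ s, w k * |a k|) ^ 2
      ≤ (∑ k ∈ s, w k) * ∑ k ∈ s, w k * (a k) ^ 2 := by
        refine Finset.sum_sq_le_sum_mul_sum_of_sq_eq_mul s hw
          (fun k hk => mul_nonneg (hw k hk) (sq_nonneg _)) (fun k hk => ?_)
        rw [mul_pow, sq_abs]
        ring
    _ = ∑ k ∈ s, w k * (a k) ^ 2 := by rw [hsum, one_mul]

-- splitting a sum over functions at coordinate i
lemma aux_split {n N : ℕ} (i : Fin n) (F : (Fin n → Fin (N + 1)) → ℝ) :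
    ∑ k : Fin n → Fin (N + 1), F k =
      ∑ ν : Fin (N + 1), ∑ r : { j : Fin n // j ≠ i } → Fin (N + 1),
        F ((Equiv.funSplitAt i (Fin (N + 1))).symm (ν, r)) := by
  rw [← Equiv.sum_comp (Equiv.funSplitAt i (Fin (N + 1))).symm F, Fintype.sum_prod_type]

lemma aux_split_apply_self {n N : ℕ} (i : Fin n) (ν : Fin (N + 1))
    (r : { j : Fin n // j ≠ i } → Fin (N + 1)) :
    (Equiv.funSplitAt i (Fin (N + 1))).symm (ν, r) i = ν := by
  simp [Equiv.funSplitAt, Equiv.piSplitAt]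

lemma aux_split_apply_ne {n N : ℕ} (i : Fin n) (ν : Fin (N + 1))
    (r : { j : Fin n // j ≠ i } → Fin (N + 1)) (j : Fin n) (hj : j ≠ i) :
    (Equiv.funSplitAt i (Fin (N + 1))).symm (ν, r) j = r ⟨j, hj⟩ := by
  simp [Equiv.funSplitAt, Equiv.piSplitAt, hj]

-- product over all coordinates splits
lemma aux_prod_split {n : ℕ} {M : Type*} [CommMonoid M] (i : Fin n) (g : Fin n → M) :
    ∏ j, g j = g i * ∏ j : { j : Fin n // j ≠ i }, g (j : Fin n) := by
  rw [Fintype.prod_eq_mul_prod_compl i, Finset.prod_subtype ({i}ᶜ : Finset (Fin n))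
    (p := fun j => j ≠ i) (fun j => by simp)]

-- marginalization
lemma aux_marginal {n N : ℕ} (i : Fin n) (g : (j : Fin n) → Fin (N + 1) → ℝ)
    (hg1 : ∀ j, ∑ ν, g j ν = 1) (a : Fin (N + 1) → ℝ) :
    ∑ k : Fin n → Fin (N + 1), (∏ j, g j (k j)) * a (k i) = ∑ ν, g i ν * a ν := by
  rw [aux_split i]
  have : ∀ (ν : Fin (N+1)) (r : { j : Fin n // j ≠ i } → Fin (N + 1)),
      (∏ j, g j ((Equiv.funSplitAt i (Fin (N + 1))).symm (ν, r) j)) *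
        a ((Equiv.funSplitAt i (Fin (N + 1))).symm (ν, r) i)
      = (g i ν * a ν) * ∏ j : { j : Fin n // j ≠ i }, g j (r j) := by
    intro ν r
    rw [aux_prod_split i (fun j => g j ((Equiv.funSplitAt i (Fin (N + 1))).symm (ν, r) j)),
      aux_split_apply_self]
    have : ∀ j : { j : Fin n // j ≠ i },
        g j ((Equiv.funSplitAt i (Fin (N + 1))).symm (ν, r) j) = g j (r j) := fun j => by
      rw [aux_split_apply_ne i ν r j j.2]
    rw [Finset.prod_congr rfl fun j _ => this j]
    ring
  have hW : ∑ r : { j : Fin n // j ≠ i } → Fin (N + 1),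
      ∏ j : { j : Fin n // j ≠ i }, g j (r j) = 1 := by
    rw [← Fintype.prod_sum]
    simp [hg1]
  simp only [this]
  refine Finset.sum_congr rfl fun ν _ => ?_
  rw [← Finset.mul_sum, hW, mul_one]


section

variable {n : ℕ} {l u : Fin n → ℝ} {B U : Set (Fin n → ℝ)} {f : (Fin n → ℝ) → ℝ}
  {Km Kp : Fin n → ℝ}

lemma aux_mem_B (hB : B = {x | ∀ i, l i ≤ x i ∧ x i ≤ u i}) {x : Fin n → ℝ} (hx : x ∈ B)
    {i : Fin n} {s : ℝ} (hls : l i ≤ s) (hsu : s ≤ u i) : Function.update x i s ∈ B := by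
  subst hB
  intro j
  by_cases hj : j = i
  · subst hj; simp [hls, hsu]
  · simp only [Function.update_of_ne hj]
    exact hx j

lemma aux_hasDerivAt (hB : B = {x | ∀ i, l i ≤ x i ∧ x i ≤ u i}) (hUopen : IsOpen U)
    (hBU : B ⊆ U) (hf : ContDiffOn ℝ 1 f U) {x : Fin n → ℝ} (hx : x ∈ B) (i : Fin n)
    {s : ℝ} (hls : l i ≤ s) (hsu : s ≤ u i) :
    HasDerivAt (fun r => f (Function.update x i r))
      (partialDeriv i f (Function.update x i s)) s := by
  have hpB : Function.update x i s ∈ B := aux_mem_B hB hx hls hsu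
  have hfd : DifferentiableAt ℝ f (Function.update x i s) :=
    (hf.contDiffAt (hUopen.mem_nhds (hBU hpB))).differentiableAt one_ne_zero
  have hψ : HasDerivAt (fun r : ℝ => Function.update x i r) (Pi.single i 1) s := by
    have heq : (fun r : ℝ => Function.update x i r)
        = fun r : ℝ => Function.update x i 0 + r • (Pi.single i 1 : Fin n → ℝ) := by
      funext r
      ext j
      by_cases hj : j = i
      · subst hj; simp
      · simp [Function.update_of_ne hj, Pi.single_eq_of_ne hj]
    rw [heq]
    simpa using ((hasDerivAt_id s).smul_const (Pi.single i 1 : Fin n → ℝ)).const_add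
      (Function.update x i 0)
  have := hfd.hasFDerivAt.comp_hasDerivAt s hψ
  exact this

lemma aux_mvt (hB : B = {x | ∀ i, l i ≤ x i ∧ x i ≤ u i}) (hUopen : IsOpen U)
    (hBU : B ⊆ U) (hf : ContDiffOn ℝ 1 f U)
    (hfbdd : ∀ x ∈ B, ∀ i, Km i ≤ partialDeriv i f x ∧ partialDeriv i f x ≤ Kp i)
    {x : Fin n → ℝ} (hx : x ∈ B) (i : Fin n) {s s' : ℝ}
    (hls : l i ≤ s) (hss : s ≤ s') (hsu : s' ≤ u i) :
    Km i * (s' - s) ≤ f (Function.update x i s') - f (Function.update x i s) ∧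
      f (Function.update x i s') - f (Function.update x i s) ≤ Kp i * (s' - s) := by
  rcases eq_or_lt_of_le hss with heq | hlt
  · subst heq; simp
  · have hD : ∀ r ∈ Set.Icc s s', HasDerivAt (fun r => f (Function.update x i r))
        (partialDeriv i f (Function.update x i r)) r := fun r hr =>
      aux_hasDerivAt hB hUopen hBU hf hx i (le_trans hls hr.1) (le_trans hr.2 hsu)
    obtain ⟨ξ, hξ, hslope⟩ := exists_hasDerivAt_eq_slope (fun r => f (Function.update x i r))
      (fun r => partialDeriv i f (Function.update x i r)) hlt
      (fun r hr => (hD r hr).continuousAt.continuousWithinAt)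
      (fun r hr => hD r (Set.mem_Icc_of_Ioo hr))
    have hξB : Function.update x i ξ ∈ B :=
      aux_mem_B hB hx (le_trans hls hξ.1.le) (le_trans hξ.2.le hsu)
    have hbd := hfbdd _ hξB i
    have hpos : (0:ℝ) < s' - s := by linarith
    have hval : f (Function.update x i s') - f (Function.update x i s)
        = partialDeriv i f (Function.update x i ξ) * (s' - s) := by
      rw [hslope]
      field_simp
    rw [hval]
    constructor
    · exact mul_le_mul_of_nonneg_right hbd.1 hpos.le
    · exact mul_le_mul_of_nonneg_right hbd.2 hpos.le

lemma aux_mvt_abs (hB : B = {x | ∀ i, l i ≤ x i ∧ x i ≤ u i}) (hUopen : IsOpen U)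
    (hBU : B ⊆ U) (hf : ContDiffOn ℝ 1 f U)
    (hfbdd : ∀ x ∈ B, ∀ i, Km i ≤ partialDeriv i f x ∧ partialDeriv i f x ≤ Kp i)
    {x : Fin n → ℝ} (hx : x ∈ B) (i : Fin n) {s s' : ℝ}
    (hls : l i ≤ s) (hls' : l i ≤ s') (hsu : s ≤ u i) (hsu' : s' ≤ u i) :
    |f (Function.update x i s') - f (Function.update x i s)|
      ≤ max |Km i| |Kp i| * |s' - s| := by
  have key : ∀ a b : ℝ, l i ≤ a → a ≤ b → b ≤ u i →
      |f (Function.update x i b) - f (Function.update x i a)| ≤ max |Km i| |Kp i| * (b - a) := by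
    intro a b hla hab hbu
    obtain ⟨h1, h2⟩ := aux_mvt hB hUopen hBU hf hfbdd hx i hla hab hbu
    rw [abs_le]
    have hba : (0:ℝ) ≤ b - a := by linarith
    constructor
    · have : -(max |Km i| |Kp i|) * (b - a) ≤ Km i * (b - a) := by
        apply mul_le_mul_of_nonneg_right _ hba
        have := le_max_left |Km i| |Kp i|
        have := neg_abs_le (Km i)
        linarith
      linarith
    · have : Kp i * (b - a) ≤ max |Km i| |Kp i| * (b - a) := by
        apply mul_le_mul_of_nonneg_right _ hba
        have := le_max_right |Km i| |Kp i|
        have := le_abs_self (Kp i)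
        linarith
      linarith
  rcases le_total s s' with hss | hss
  · rw [abs_of_nonneg (by linarith : (0:ℝ) ≤ s' - s)] at *
    exact key s s' hls hss hsu'
  · rw [abs_of_nonpos (by linarith : s' - s ≤ 0), abs_sub_comm]
    have := key s' s hls' hss hsu
    linarith [this]

lemma aux_lip (hB : B = {x | ∀ i, l i ≤ x i ∧ x i ≤ u i}) (hUopen : IsOpen U)
    (hBU : B ⊆ U) (hf : ContDiffOn ℝ 1 f U)
    (hfbdd : ∀ x ∈ B, ∀ i, Km i ≤ partialDeriv i f x ∧ partialDeriv i f x ≤ Kp i)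
    {x y : Fin n → ℝ} (hx : x ∈ B) (hy : y ∈ B) :
    |f y - f x| ≤ ∑ i, max |Km i| |Kp i| * |y i - x i| := by
  have key : ∀ s : Finset (Fin n), ∀ y ∈ B, (∀ j, j ∉ s → y j = x j) →
      |f y - f x| ≤ ∑ i ∈ s, max |Km i| |Kp i| * |y i - x i| := by
    intro s
    induction s using Finset.induction_on with
    | empty =>
      intro y hyB hagree
      have : y = x := funext fun j => hagree j (Finset.notMem_empty j)
      subst this
      simp
    | @insert a s' ha ih =>
      intro y hyB hagree
      have hxB' := hB ▸ hx
      have hyB' := hB ▸ hyB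
      set z := Function.update y a (x a) with hz
      have hzB : z ∈ B := aux_mem_B hB hyB (hxB' a).1 (hxB' a).2
      have hzagree : ∀ j, j ∉ s' → z j = x j := by
        intro j hj
        by_cases hja : j = a
        · subst hja; simp [hz]
        · rw [hz, Function.update_of_ne hja]
          exact hagree j (by simp [hja, hj])
      have h1 : |f y - f z| ≤ max |Km a| |Kp a| * |y a - x a| := by
        have hyz : y = Function.update z a (y a) := by
          funext j
          by_cases hja : j = a
          · subst hja; simp
          · rw [Function.update_of_ne hja, hz, Function.update_of_ne hja]
        have hzz : z = Function.update z a (x a) := by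
          funext j
          by_cases hja : j = a
          · subst hja; simp [hz]
          · rw [Function.update_of_ne hja]
        calc |f y - f z| = |f (Function.update z a (y a)) - f (Function.update z a (x a))| := by
              rw [← hyz, ← hzz]
          _ ≤ max |Km a| |Kp a| * |y a - x a| :=
            aux_mvt_abs hB hUopen hBU hf hfbdd hzB a (hxB' a).1 (hyB' a).1 (hxB' a).2 (hyB' a).2
      have h2 := ih z hzB hzagree
      have h3 : ∑ i ∈ s', max |Km i| |Kp i| * |z i - x i|
          = ∑ i ∈ s', max |Km i| |Kp i| * |y i - x i| := by
        refine Finset.sum_congr rfl fun j hj => ?_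
        have hja : j ≠ a := fun hh => ha (hh ▸ hj)
        rw [hz, Function.update_of_ne hja]
      rw [Finset.sum_insert ha]
      calc |f y - f x| ≤ |f y - f z| + |f z - f x| := abs_sub_le _ _ _
        _ ≤ max |Km a| |Kp a| * |y a - x a| + ∑ i ∈ s', max |Km i| |Kp i| * |y i - x i| := by
            rw [← h3]; exact add_le_add h1 h2
  exact key Finset.univ y hy (fun j hj => absurd (Finset.mem_univ j) hj)

end

lemma aux_abel' (N N0 : ℕ) (hNN : N = N0 + 1) (a : ℕ → ℝ) (t : ℝ) :
    ∑ m ∈ Finset.range (N + 1),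
        a m * (Polynomial.derivative (bernsteinPolynomial ℝ N m)).eval t
      = (N : ℝ) * ∑ m ∈ Finset.range N,
          (a (m + 1) - a m) * (bernsteinPolynomial ℝ N0 m).eval t := by
  subst hNN
  have := aux_abel N0 a t
  push_cast at this ⊢
  exact this

lemma aux_bern_sum' (N N0 : ℕ) (hNN : N = N0 + 1) (t : ℝ) :
    ∑ m ∈ Finset.range N, (bernsteinPolynomial ℝ N0 m).eval t = 1 := by
  subst hNN
  exact aux_bern_sum N0 t

set_option maxHeartbeats 1000000

/-- A continuously differentiable function with `K`-bounded derivatives over a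
full-dimensional box `B` can be approximated uniformly on `B`, to any accuracy, by a
polynomial with `K`-bounded derivatives over `B`. -/
theorem bounded_derivative_polynomial_approximation
    (n : ℕ) (l u : Fin n → ℝ) (hlu : ∀ i, l i < u i)
    (B : Set (Fin n → ℝ)) (hB : B = {x | ∀ i, l i ≤ x i ∧ x i ≤ u i})
    (Km Kp : Fin n → ℝ) (hK : ∀ i, Km i < Kp i)
    (f : (Fin n → ℝ) → ℝ)
    (U : Set (Fin n → ℝ)) (hUopen : IsOpen U) (hBU : B ⊆ U)
    (hf : ContDiffOn ℝ 1 f U)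
    (hfbdd : ∀ x ∈ B, ∀ i, Km i ≤ partialDeriv i f x ∧ partialDeriv i f x ≤ Kp i) :
    ∀ ε > (0 : ℝ), ∃ (d : ℕ) (h : MvPolynomial (Fin n) ℝ),
      h.totalDegree ≤ d ∧
      (∀ x ∈ B, ∀ i, Km i ≤ eval x (pderiv i h) ∧ eval x (pderiv i h) ≤ Kp i) ∧
      ∀ x ∈ B, |eval x h - f x| < ε := by
  classical
  intro ε hε
  -- basic constants
  set c : Fin n → ℝ := fun i => u i - l i with hc_def
  have hc : ∀ i, 0 < c i := fun i => sub_pos.mpr (hlu i)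
  set Mv : Fin n → ℝ := fun i => max |Km i| |Kp i| with hMv_def
  have hMv : ∀ i, 0 ≤ Mv i := fun i => le_trans (abs_nonneg _) (le_max_left _ _)
  set A : ℝ := ∑ i, Mv i * c i with hA_def
  have hA0 : 0 ≤ A := Finset.sum_nonneg fun i _ => mul_nonneg (hMv i) (hc i).le
  obtain ⟨N0, hN0⟩ := exists_nat_gt ((A / ε) ^ 2)
  set N : ℕ := N0 + 1 with hN_def
  have hNposR : (0:ℝ) < N := by positivity
  have hNne : (N:ℝ) ≠ 0 := ne_of_gt hNposR
  have hAε : A < ε * Real.sqrt N := by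
    have h1 : Real.sqrt ((A / ε) ^ 2) < Real.sqrt N := by
      apply Real.sqrt_lt_sqrt (sq_nonneg _)
      have h2 : ((N0:ℝ)) < N := by exact_mod_cast Nat.lt_succ_self N0
      linarith
    rw [Real.sqrt_sq_eq_abs] at h1
    have h2 : A / ε < Real.sqrt N := lt_of_le_of_lt (le_abs_self _) h1
    calc A = A / ε * ε := by field_simp
      _ < Real.sqrt N * ε := mul_lt_mul_of_pos_right h2 hε
      _ = ε * Real.sqrt N := mul_comm _ _
  -- normalized coordinates
  set t : (Fin n → ℝ) → Fin n → ℝ := fun x i => (x i - l i) / c i with ht_def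
  have htmem : ∀ x ∈ B, ∀ i, 0 ≤ t x i ∧ t x i ≤ 1 := by
    intro x hx i
    rw [hB] at hx
    constructor
    · have h1 : (0:ℝ) ≤ (x i - l i) / c i :=
        div_nonneg (by have := (hx i).1; linarith) (hc i).le
      exact h1
    · have h1 : (x i - l i) / c i ≤ 1 := by
        rw [div_le_one (hc i)]
        have h2 := (hx i).2
        have h3 : c i = u i - l i := rfl
        linarith
      exact h1
  have hxl : ∀ x ∈ B, ∀ i, x i - l i = t x i * c i := by
    intro x hx i
    have h1 : t x i * c i = x i - l i := div_mul_cancel₀ (x i - l i) (ne_of_gt (hc i))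
    linarith
  -- polynomial ingredients
  set σp : Fin n → MvPolynomial (Fin n) ℝ :=
    fun i => MvPolynomial.C (c i)⁻¹ * (MvPolynomial.X i - MvPolynomial.C (l i)) with hσ_def
  have heσ : ∀ (x : Fin n → ℝ) (i : Fin n), eval x (σp i) = t x i := by
    intro x i
    simp [hσ_def, ht_def, div_eq_inv_mul]
  have hpdσ_self : ∀ i, pderiv i (σp i) = MvPolynomial.C (c i)⁻¹ := by
    intro i
    simp [hσ_def, pderiv_C_mul, pderiv_X_self]
  have hpdσ_ne : ∀ i j, j ≠ i → pderiv i (σp j) = 0 := by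
    intro i j hj
    simp [hσ_def, pderiv_C_mul, pderiv_X_of_ne hj]
  set Ap : Fin n → ℕ → MvPolynomial (Fin n) ℝ :=
    fun j m => Polynomial.aeval (σp j) (bernsteinPolynomial ℝ N m) with hAp_def
  have hevalAp : ∀ (x : Fin n → ℝ) (j : Fin n) (m : ℕ),
      eval x (Ap j m) = (bernsteinPolynomial ℝ N m).eval (t x j) := by
    intro x j m
    simp only [hAp_def]
    rw [aux_eval_aeval, heσ]
  have hpdAp_ne : ∀ (i j : Fin n) (m : ℕ), j ≠ i → pderiv i (Ap j m) = 0 := by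
    intro i j m hj
    simp only [hAp_def]
    rw [aux_pderiv_aeval, hpdσ_ne i j hj, mul_zero]
  have hpdAp_self : ∀ (i : Fin n) (m : ℕ), pderiv i (Ap i m)
      = Polynomial.aeval (σp i) (Polynomial.derivative (bernsteinPolynomial ℝ N m))
        * MvPolynomial.C (c i)⁻¹ := by
    intro i m
    simp only [hAp_def]
    rw [aux_pderiv_aeval, hpdσ_self]
  -- grid nodes
  set node : (Fin n → Fin (N+1)) → (Fin n → ℝ) :=
    fun k j => l j + (k j : ℝ) / N * c j with hnode_def
  have hkle : ∀ (k : Fin n → Fin (N+1)) (j : Fin n), ((k j : ℕ):ℝ) ≤ N := by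
    intro k j
    exact_mod_cast Nat.lt_succ_iff.mp (k j).isLt
  have hnodeB : ∀ k, node k ∈ B := by
    intro k
    rw [hB]
    intro j
    have h0 : (0:ℝ) ≤ (k j : ℝ) / N := by positivity
    have h1 : ((k j : ℝ)) / N ≤ 1 := by
      rw [div_le_one hNposR]
      exact hkle k j
    have hcj := hc j
    have hnkj : node k j = l j + (k j : ℝ) / N * c j := rfl
    constructor
    · rw [hnkj]
      nlinarith
    · rw [hnkj]
      have hcuj : c j = u j - l j := rfl
      nlinarith
  -- the approximating polynomial
  set hpoly : MvPolynomial (Fin n) ℝ :=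
    ∑ k : Fin n → Fin (N+1), MvPolynomial.C (f (node k)) * ∏ j, Ap j (k j) with hh_def
  refine ⟨hpoly.totalDegree, hpoly, le_rfl, ?_, ?_⟩
  · -- derivative bounds
    intro x hxB i
    set G : Fin n → Fin (N+1) → ℝ :=
      fun j ν => (bernsteinPolynomial ℝ N (ν : ℕ)).eval (t x j) with hG_def
    have hGnn : ∀ (j : Fin n) (ν : Fin (N+1)), 0 ≤ G j ν :=
      fun j ν => aux_bern_nonneg (htmem x hxB j).1 (htmem x hxB j).2
    have hGsum : ∀ j, ∑ ν, G j ν = 1 := by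
      intro j
      rw [hG_def]
      rw [Fin.sum_univ_eq_sum_range (fun m => (bernsteinPolynomial ℝ N m).eval (t x j)) (N+1)]
      exact aux_bern_sum N (t x j)
    have ht01 := htmem x hxB i
    have hcomp : eval x (pderiv i hpoly) = ∑ k : Fin n → Fin (N+1),
        f (node k) * ((Polynomial.derivative (bernsteinPolynomial ℝ N ((k i : ℕ)))).eval (t x i)
          * (c i)⁻¹ * ∏ j : {j : Fin n // j ≠ i}, G j (k j)) := by
      rw [hh_def, map_sum (pderiv i), map_sum (eval x)]
      refine Finset.sum_congr rfl fun k _ => ?_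
      rw [pderiv_C_mul]
      rw [aux_prod_split i (fun j => Ap j (k j))]
      rw [pderiv_mul, hpdAp_self,
        aux_pderiv_prod_zero i (Finset.univ : Finset {j : Fin n // j ≠ i})
          (fun j => Ap (j : Fin n) (k (j : Fin n)))
          (fun j _ => hpdAp_ne i (j : Fin n) (k (j : Fin n)) j.2),
        mul_zero, add_zero]
      simp only [map_mul, eval_C, map_prod, hevalAp, aux_eval_aeval, heσ, hG_def]
      try ring
    set e := (Equiv.funSplitAt i (Fin (N+1))).symm with he_def
    set base : ({j : Fin n // j ≠ i} → Fin (N+1)) → (Fin n → ℝ) :=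
      fun r => node (e (0, r)) with hbase_def
    have hbaseB : ∀ r, base r ∈ B := fun r => hnodeB _
    set a : ({j : Fin n // j ≠ i} → Fin (N+1)) → ℕ → ℝ :=
      fun r m => f (Function.update (base r) i (l i + (m : ℝ) / N * c i)) with ha_def
    have hnodee : ∀ (ν : Fin (N+1)) (r : {j : Fin n // j ≠ i} → Fin (N+1)),
        node (e (ν, r)) = Function.update (base r) i (l i + ((ν : ℕ) : ℝ) / N * c i) := by
      intro ν r
      funext j
      by_cases hj : j = i
      · subst hj
        rw [Function.update_self]
        simp only [hnode_def, he_def]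
        rw [aux_split_apply_self]
      · rw [Function.update_of_ne hj]
        simp only [hbase_def, hnode_def, he_def]
        rw [aux_split_apply_ne i ν r j hj, aux_split_apply_ne i 0 r j hj]
    set W : ({j : Fin n // j ≠ i} → Fin (N+1)) → ℝ :=
      fun r => ∏ j : {j : Fin n // j ≠ i}, G j (r j) with hW_def
    have hWnn : ∀ r, 0 ≤ W r :=
      fun r => Finset.prod_nonneg fun j _ => hGnn j (r j)
    have hWsum : ∑ r : {j : Fin n // j ≠ i} → Fin (N+1), W r = 1 := by
      simp only [hW_def]
      rw [← Fintype.prod_sum]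
      simp only [hGsum]
      exact Finset.prod_const_one
    have hinner : ∀ r : {j : Fin n // j ≠ i} → Fin (N+1),
        (∑ ν : Fin (N+1), f (node (e (ν, r))) *
            ((Polynomial.derivative (bernsteinPolynomial ℝ N ((ν : ℕ)))).eval (t x i)
              * (c i)⁻¹ * W r))
        = W r * ∑ m ∈ Finset.range N, (bernsteinPolynomial ℝ N0 m).eval (t x i) *
            ((N : ℝ) * (c i)⁻¹ * (a r (m+1) - a r m)) := by
      intro r
      have step1 : ∀ ν : Fin (N+1), f (node (e (ν, r))) *
          ((Polynomial.derivative (bernsteinPolynomial ℝ N ((ν : ℕ)))).eval (t x i)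
            * (c i)⁻¹ * W r)
          = ((c i)⁻¹ * W r) * (a r (ν : ℕ) *
              (Polynomial.derivative (bernsteinPolynomial ℝ N ((ν : ℕ)))).eval (t x i)) := by
        intro ν
        have har : a r (ν : ℕ) = f (node (e (ν, r))) := by
          simp only [ha_def]
          rw [← hnodee ν r]
        rw [har]
        ring
      rw [Finset.sum_congr rfl fun ν _ => step1 ν, ← Finset.mul_sum]
      rw [Fin.sum_univ_eq_sum_range
        (fun m => a r m * (Polynomial.derivative (bernsteinPolynomial ℝ N m)).eval (t x i)) (N+1)]
      rw [aux_abel' N N0 hN_def (a r) (t x i)]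
      simp only [Finset.mul_sum]
      refine Finset.sum_congr rfl fun m _ => ?_
      ring
    have hfinal : eval x (pderiv i hpoly) =
        ∑ r : {j : Fin n // j ≠ i} → Fin (N+1),
          W r * ∑ m ∈ Finset.range N, (bernsteinPolynomial ℝ N0 m).eval (t x i) *
            ((N : ℝ) * (c i)⁻¹ * (a r (m+1) - a r m)) := by
      rw [hcomp, aux_split i, Finset.sum_comm]
      refine Finset.sum_congr rfl fun r _ => ?_
      have hred : ∀ ν : Fin (N+1),
          f (node ((Equiv.funSplitAt i (Fin (N+1))).symm (ν, r))) *
            ((Polynomial.derivative (bernsteinPolynomial ℝ N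
                (((Equiv.funSplitAt i (Fin (N+1))).symm (ν, r) i : ℕ)))).eval (t x i)
              * (c i)⁻¹ *
              ∏ j : {j : Fin n // j ≠ i},
                G j ((Equiv.funSplitAt i (Fin (N+1))).symm (ν, r) j))
          = f (node (e (ν, r))) *
            ((Polynomial.derivative (bernsteinPolynomial ℝ N ((ν : ℕ)))).eval (t x i)
              * (c i)⁻¹ * W r) := by
        intro ν
        have h1 : (Equiv.funSplitAt i (Fin (N+1))).symm (ν, r) i = ν :=
          aux_split_apply_self i ν r
        have h3 : (∏ j : {j : Fin n // j ≠ i},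
            G j ((Equiv.funSplitAt i (Fin (N+1))).symm (ν, r) j)) = W r := by
          simp only [hW_def]
          exact Finset.prod_congr rfl fun j _ => by
            rw [aux_split_apply_ne i ν r (j : Fin n) j.2]
        rw [h1, h3]
        try rfl
      rw [Finset.sum_congr rfl fun ν _ => hred ν]
      exact hinner r
    -- bounds on the normalized differences
    have hV : ∀ (r : {j : Fin n // j ≠ i} → Fin (N+1)) (m : ℕ), m ∈ Finset.range N →
        Km i ≤ (N : ℝ) * (c i)⁻¹ * (a r (m+1) - a r m) ∧
          (N : ℝ) * (c i)⁻¹ * (a r (m+1) - a r m) ≤ Kp i := by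
      intro r m hm
      have hmN : (m:ℝ) + 1 ≤ N := by
        have := Finset.mem_range.mp hm
        exact_mod_cast this
      have hm0 : (0:ℝ) ≤ (m:ℝ) := Nat.cast_nonneg m
      set s1 : ℝ := l i + (m : ℝ) / N * c i with hs1_def
      set s2 : ℝ := l i + ((m : ℝ) + 1) / N * c i with hs2_def
      have hci := hc i
      have hls1 : l i ≤ s1 := by
        rw [hs1_def]
        have : (0:ℝ) ≤ (m:ℝ)/N * c i := by positivity
        linarith
      have hs12 : s1 ≤ s2 := by
        rw [hs1_def, hs2_def]
        have : (m:ℝ)/N ≤ ((m:ℝ)+1)/N := by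
          gcongr
          linarith
        nlinarith
      have hs2u : s2 ≤ u i := by
        rw [hs2_def]
        have h1 : ((m:ℝ)+1)/N ≤ 1 := by
          rw [div_le_one hNposR]
          exact hmN
        have : u i = l i + c i := by rw [hc_def]; ring
        nlinarith
      have hd := aux_mvt hB hUopen hBU hf hfbdd (hbaseB r) i hls1 hs12 hs2u
      have hdd : a r (m+1) - a r m
          = f (Function.update (base r) i s2) - f (Function.update (base r) i s1) := by
        simp only [ha_def, hs1_def, hs2_def]
        push_cast
        try rfl
      have hs21 : s2 - s1 = c i / N := by
        rw [hs1_def, hs2_def]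
        field_simp
        ring
      rw [hdd]
      rw [hs21] at hd
      constructor
      · calc Km i = (N : ℝ) * (c i)⁻¹ * (Km i * (c i / N)) := by field_simp
          _ ≤ _ := mul_le_mul_of_nonneg_left hd.1 (by positivity)
      · calc (N : ℝ) * (c i)⁻¹ *
              (f (Function.update (base r) i s2) - f (Function.update (base r) i s1))
            ≤ (N : ℝ) * (c i)⁻¹ * (Kp i * (c i / N)) :=
              mul_le_mul_of_nonneg_left hd.2 (by positivity)
          _ = Kp i := by field_simp
    rw [hfinal]
    refine aux_convex Finset.univ W _ (Km i) (Kp i) (fun r _ => hWnn r) hWsum (fun r _ => ?_)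
    exact aux_convex (Finset.range N) (fun m => (bernsteinPolynomial ℝ N0 m).eval (t x i))
      (fun m => (N : ℝ) * (c i)⁻¹ * (a r (m+1) - a r m)) (Km i) (Kp i)
      (fun m _ => aux_bern_nonneg ht01.1 ht01.2)
      (aux_bern_sum' N N0 hN_def (t x i)) (hV r)
  · -- uniform approximation
    intro x hxB
    set G : Fin n → Fin (N+1) → ℝ :=
      fun j ν => (bernsteinPolynomial ℝ N (ν : ℕ)).eval (t x j) with hG_def
    have hGnn : ∀ (j : Fin n) (ν : Fin (N+1)), 0 ≤ G j ν :=
      fun j ν => aux_bern_nonneg (htmem x hxB j).1 (htmem x hxB j).2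
    have hGsum : ∀ j, ∑ ν, G j ν = 1 := by
      intro j
      rw [hG_def]
      rw [Fin.sum_univ_eq_sum_range (fun m => (bernsteinPolynomial ℝ N m).eval (t x j)) (N+1)]
      exact aux_bern_sum N (t x j)
    have hwtnn : ∀ k : Fin n → Fin (N+1), 0 ≤ ∏ j, G j (k j) :=
      fun k => Finset.prod_nonneg fun j _ => hGnn _ _
    have hwt1 : ∑ k : Fin n → Fin (N+1), (∏ j, G j (k j)) = 1 := by
      rw [← Fintype.prod_sum]
      simp only [hGsum]
      exact Finset.prod_const_one
    have hval : eval x hpoly = ∑ k : Fin n → Fin (N+1), (∏ j, G j (k j)) * f (node k) := by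
      rw [hh_def, map_sum (eval x)]
      refine Finset.sum_congr rfl fun k _ => ?_
      rw [map_mul, eval_C, map_prod]
      simp only [hevalAp, hG_def]
      ring
    have hdiff : eval x hpoly - f x
        = ∑ k : Fin n → Fin (N+1), (∏ j, G j (k j)) * (f (node k) - f x) := by
      rw [hval]
      simp only [mul_sub]
      rw [Finset.sum_sub_distrib, ← Finset.sum_mul, hwt1, one_mul]
    have hnode_diff : ∀ (k : Fin n → Fin (N+1)) (i : Fin n),
        |node k i - x i| = c i * |((k i : ℕ):ℝ)/N - t x i| := by
      intro k i
      have h1 : node k i - x i = (((k i : ℕ):ℝ)/N - t x i) * c i := by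
        have h2 := hxl x hxB i
        have h3 : node k i = l i + (k i : ℝ) / N * c i := rfl
        rw [h3]
        linear_combination -h2
      rw [h1, abs_mul, abs_of_pos (hc i), mul_comm]
    have hstep1 : |eval x hpoly - f x| ≤ ∑ k : Fin n → Fin (N+1),
        (∏ j, G j (k j)) * (∑ i, Mv i * c i * |((k i : ℕ):ℝ)/N - t x i|) := by
      rw [hdiff]
      refine (Finset.abs_sum_le_sum_abs _ _).trans ?_
      refine Finset.sum_le_sum fun k _ => ?_
      rw [abs_mul, abs_of_nonneg (hwtnn k)]
      refine mul_le_mul_of_nonneg_left ?_ (hwtnn k)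
      refine (aux_lip hB hUopen hBU hf hfbdd hxB (hnodeB k)).trans ?_
      apply le_of_eq
      refine Finset.sum_congr rfl fun i _ => ?_
      rw [hnode_diff k i]
      simp only [hMv_def]
      ring
    have hswap : (∑ k : Fin n → Fin (N+1),
          (∏ j, G j (k j)) * (∑ i, Mv i * c i * |((k i : ℕ):ℝ)/N - t x i|))
        = ∑ i, Mv i * c i * (∑ ν : Fin (N+1), G i ν * |((ν : ℕ):ℝ)/N - t x i|) := by
      simp only [Finset.mul_sum]
      rw [Finset.sum_comm]
      refine Finset.sum_congr rfl fun i _ => ?_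
      have hm := aux_marginal i G hGsum (fun ν => |((ν : ℕ):ℝ)/N - t x i|)
      calc ∑ k : Fin n → Fin (N+1), (∏ j, G j (k j)) * (Mv i * c i * |((k i : ℕ):ℝ)/N - t x i|)
          = Mv i * c i * ∑ k : Fin n → Fin (N+1),
              (∏ j, G j (k j)) * |((k i : ℕ):ℝ)/N - t x i| := by
            rw [Finset.mul_sum]
            exact Finset.sum_congr rfl fun k _ => by ring
        _ = Mv i * c i * ∑ ν : Fin (N+1), G i ν * |((ν : ℕ):ℝ)/N - t x i| := by rw [hm]
        _ = ∑ ν : Fin (N+1), Mv i * c i * (G i ν * |((ν : ℕ):ℝ)/N - t x i|) := by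
            rw [Finset.mul_sum]
    have hmarg : ∀ i : Fin n, (∑ ν : Fin (N+1), G i ν * |((ν : ℕ):ℝ)/N - t x i|)
        ≤ Real.sqrt (1/(4*N)) := by
      intro i
      refine (aux_cs Finset.univ (G i) (fun ν => ((ν : ℕ):ℝ)/N - t x i)
        (fun ν _ => hGnn i ν) (hGsum i)).trans ?_
      apply Real.sqrt_le_sqrt
      have hconv : (∑ ν : Fin (N+1), G i ν * (((ν : ℕ):ℝ)/N - t x i)^2)
          = ∑ m ∈ Finset.range (N+1),
              ((m:ℝ)/N - t x i)^2 * (bernsteinPolynomial ℝ N m).eval (t x i) := by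
        rw [Fin.sum_univ_eq_sum_range
          (fun m => (bernsteinPolynomial ℝ N m).eval (t x i) * ((m:ℝ)/N - t x i)^2) (N+1)]
        exact Finset.sum_congr rfl fun m _ => by ring
      rw [hconv]
      exact aux_bern_var (Nat.succ_pos N0) (htmem x hxB i).1 (htmem x hxB i).2
    have hsqrt : Real.sqrt (1/(4*(N:ℝ))) ≤ 1 / Real.sqrt N := by
      have h1 : (1:ℝ)/(4*N) ≤ 1/N := by
        apply one_div_le_one_div_of_le hNposR
        linarith
      calc Real.sqrt (1/(4*(N:ℝ))) ≤ Real.sqrt (1/(N:ℝ)) := Real.sqrt_le_sqrt h1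
        _ = 1 / Real.sqrt N := by rw [one_div, Real.sqrt_inv, one_div]
    calc |eval x hpoly - f x|
        ≤ ∑ k : Fin n → Fin (N+1),
            (∏ j, G j (k j)) * (∑ i, Mv i * c i * |((k i : ℕ):ℝ)/N - t x i|) := hstep1
      _ = ∑ i, Mv i * c i * (∑ ν : Fin (N+1), G i ν * |((ν : ℕ):ℝ)/N - t x i|) := hswap
      _ ≤ ∑ i, Mv i * c i * Real.sqrt (1/(4*(N:ℝ))) :=
          Finset.sum_le_sum fun i _ =>
            mul_le_mul_of_nonneg_left (hmarg i) (mul_nonneg (hMv i) (hc i).le)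
      _ = A * Real.sqrt (1/(4*(N:ℝ))) := by rw [hA_def, Finset.sum_mul]
      _ ≤ A * (1 / Real.sqrt N) := mul_le_mul_of_nonneg_left hsqrt hA0
      _ < ε := by
          have hsq : 0 < Real.sqrt N := Real.sqrt_pos.mpr hNposR
          rw [mul_one_div, div_lt_iff₀ hsq]
          exact hAε
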